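/- Let (x_j)_{j=1}^m be a full spark frame of unit vectors in ℝ^n (n≥2, m≥n) and let 0<λ<1, with ε = arccos(λ). Then (x_j)_{j=1}^m does λ-saturation recovery on the closed unit ball of ℝ^n if and only if for every unit vector x∈ℝ^n, the number of indices j∈{1,…,m} with arccos(|⟨x,x_j⟩|) < ε is at most m−n (i.e., the open balls of radius ε centered at the lines [x_j] form an (m−n)-fold multi-packing in real projective space P^{n−1}). -/

import Mathlib

local notation "⟪" x ", " y "⟫" => @inner ℝ _ _ x y

noncomputable def satur (l t : ℝ) : ℝ := max (-l) (min l t)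

lemma satur_of_abs_le {l t : ℝ} (h : |t| ≤ l) : satur l t = t := by
  rw [abs_le] at h
  rw [satur, min_eq_right h.2, max_eq_right h.1]

lemma satur_of_le {l t : ℝ} (hl : 0 ≤ l) (h : l ≤ t) : satur l t = l := by
  rw [satur, min_eq_left h, max_eq_right (by linarith)]

lemma satur_of_le_neg {l t : ℝ} (hl : 0 ≤ l) (h : t ≤ -l) : satur l t = -l := by
  rw [satur, min_eq_right (by linarith), max_eq_left h]

lemma satur_eq_cases {l s t : ℝ} (hl : 0 < l) (h : satur l s = satur l t) :
    s = t ∨ (l ≤ s ∧ l ≤ t) ∨ (s ≤ -l ∧ t ≤ -l) := by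
  rcases le_or_gt l s with hs2 | hs2
  · rw [satur_of_le hl.le hs2] at h
    rcases le_or_gt l t with ht2 | ht2
    · exact Or.inr (Or.inl ⟨hs2, ht2⟩)
    · rcases le_or_gt t (-l) with ht1 | ht1
      · rw [satur_of_le_neg hl.le ht1] at h; linarith
      · rw [satur_of_abs_le (abs_le.mpr ⟨ht1.le, ht2.le⟩)] at h; linarith
  · rcases le_or_gt s (-l) with hs1 | hs1
    · rw [satur_of_le_neg hl.le hs1] at h
      rcases le_or_gt t (-l) with ht1 | ht1
      · exact Or.inr (Or.inr ⟨hs1, ht1⟩)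
      · rcases le_or_gt l t with ht2 | ht2
        · rw [satur_of_le hl.le ht2] at h; linarith
        · rw [satur_of_abs_le (abs_le.mpr ⟨ht1.le, ht2.le⟩)] at h; linarith
    · rw [satur_of_abs_le (abs_le.mpr ⟨hs1.le, hs2.le⟩)] at h
      rcases le_or_gt l t with ht2 | ht2
      · rw [satur_of_le hl.le ht2] at h; linarith
      · rcases le_or_gt t (-l) with ht1 | ht1
        · rw [satur_of_le_neg hl.le ht1] at h; linarith
        · rw [satur_of_abs_le (abs_le.mpr ⟨ht1.le, ht2.le⟩)] at h; exact Or.inl h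

lemma eq_zero_of_orth {n m : ℕ} (hn : 0 < n) (xv : Fin m → EuclideanSpace ℝ (Fin n))
    (s : Finset (Fin m)) (hcard : s.card = n)
    (hli : LinearIndependent ℝ (fun j : {j // j ∈ s} => xv j.1))
    (u : EuclideanSpace ℝ (Fin n)) (hu : ∀ j ∈ s, ⟪u, xv j⟫ = 0) : u = 0 := by
  have hne : Nonempty {j // j ∈ s} := by
    rw [Finset.nonempty_coe_sort]
    exact Finset.card_pos.mp (by omega)
  have hspan := hli.span_eq_top_of_card_eq_finrank
    (by simp [Fintype.card_coe, hcard, finrank_euclideanSpace_fin])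
  have hu' : u ∈ Submodule.span ℝ (Set.range (fun j : {j // j ∈ s} => xv j.1)) :=
    hspan ▸ Submodule.mem_top
  obtain ⟨c, hc⟩ := (Submodule.mem_span_range_iff_exists_fun ℝ).mp hu'
  have h0 : ⟪u, u⟫ = (0:ℝ) := by
    nth_rewrite 1 [← hc]
    rw [sum_inner]
    apply Finset.sum_eq_zero
    intro i _
    rw [real_inner_smul_left, real_inner_comm, hu i.1 i.2, mul_zero]
  exact inner_self_eq_zero.mp h0

lemma exists_orth {n m : ℕ} (xv : Fin m → EuclideanSpace ℝ (Fin n))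
    (T : Finset (Fin m)) (hcard : T.card < n) :
    ∃ u : EuclideanSpace ℝ (Fin n), ‖u‖ = 1 ∧ ∀ j ∈ T, ⟪u, xv j⟫ = 0 := by
  classical
  set K := Submodule.span ℝ ((T.image xv : Finset (EuclideanSpace ℝ (Fin n))) : Set (EuclideanSpace ℝ (Fin n))) with hK
  have hfr : Module.finrank ℝ K < n := by
    calc Module.finrank ℝ K ≤ (T.image xv).card := finrank_span_finset_le_card _
    _ ≤ T.card := Finset.card_image_le
    _ < n := hcard
  have hKne : Kᗮ ≠ ⊥ := by
    intro hbot
    have := Submodule.orthogonal_eq_bot_iff.mp hbot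
    rw [this] at hfr
    simp [finrank_euclideanSpace_fin] at hfr
  obtain ⟨v, hvK, hv0⟩ := Submodule.exists_mem_ne_zero_of_ne_bot hKne
  refine ⟨‖v‖⁻¹ • v, norm_smul_inv_norm hv0, fun j hj => ?_⟩
  have hmem : xv j ∈ K :=
    Submodule.subset_span (Finset.mem_coe.mpr (Finset.mem_image_of_mem xv hj))
  have := (Submodule.mem_orthogonal K v).mp hvK (xv j) hmem
  rw [real_inner_smul_left, real_inner_comm, this, mul_zero]
lemma count_aux {m n : ℕ} (hmn : n ≤ m) (p : Fin m → Prop) [DecidablePred p] :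
    ({j : Fin m | ¬ p j}.ncard ≤ m - n ↔ n ≤ (Finset.univ.filter p).card) := by
  have h1 : {j : Fin m | ¬ p j}.ncard = (Finset.univ.filter (fun j => ¬ p j)).card := by
    rw [Set.ncard_eq_toFinset_card']
    simp [Set.toFinset_setOf]
  have h2 : (Finset.univ.filter p).card + (Finset.univ.filter (fun j => ¬ p j)).card
      = m := by
    rw [Finset.card_filter_add_card_filter_not]
    simp
  omega

theorem saturation_recovery_iff_multifold_packing
    {n m : ℕ} (hn : 2 ≤ n) (hmn : n ≤ m)
    (xv : Fin m → EuclideanSpace ℝ (Fin n)) (hunit : ∀ j, ‖xv j‖ = 1)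
    (hfs : ∀ s : Finset (Fin m), s.card = n →
      LinearIndependent ℝ (fun j : {j // j ∈ s} => xv j.1))
    (lam : ℝ) (hlam0 : 0 < lam) (hlam1 : lam < 1) :
    Set.InjOn
        (fun x : EuclideanSpace ℝ (Fin n) => fun j : Fin m => satur lam ⟪x, xv j⟫)
        (Metric.closedBall 0 1) ↔
      ∀ x : EuclideanSpace ℝ (Fin n), ‖x‖ = 1 →
        {j : Fin m | Real.arccos |⟪x, xv j⟫| < Real.arccos lam}.ncard ≤ m - n := by
  classical
  have habs : ∀ (x : EuclideanSpace ℝ (Fin n)), ‖x‖ ≤ 1 → ∀ j, |⟪x, xv j⟫| ≤ 1 := by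
    intro x hx j
    calc |⟪x, xv j⟫| ≤ ‖x‖ * ‖xv j‖ := abs_real_inner_le_norm x (xv j)
    _ ≤ 1 := by rw [hunit j, mul_one]; exact hx
  have hseteq : ∀ (x : EuclideanSpace ℝ (Fin n)), ‖x‖ = 1 →
      {j : Fin m | Real.arccos |⟪x, xv j⟫| < Real.arccos lam}
        = {j : Fin m | ¬ (|⟪x, xv j⟫| ≤ lam)} := by
    intro x hx
    ext j
    simp only [Set.mem_setOf_eq, not_le]
    exact Real.strictAntiOn_arccos.lt_iff_gt
      ⟨by linarith [abs_nonneg (⟪x, xv j⟫ : ℝ)], habs x hx.le j⟩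
      ⟨by linarith, hlam1.le⟩
  constructor
  · -- injectivity → packing
    intro hinj x hx
    rw [hseteq x hx, count_aux hmn]
    by_contra hcon
    push_neg at hcon
    obtain ⟨u, hu1, hu2⟩ := exists_orth xv
      (Finset.univ.filter (fun j => |⟪x, xv j⟫| ≤ lam)) hcon
    set S := Finset.univ.filter (fun j => ¬ |⟪x, xv j⟫| ≤ lam) with hS
    have hScard : (Finset.univ.filter (fun j => |⟪x, xv j⟫| ≤ lam)).card + S.card = m := by
      rw [hS, Finset.card_filter_add_card_filter_not]
      simp
    have hSne : S.Nonempty := by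
      rw [← Finset.card_pos]
      omega
    obtain ⟨j0, hj0S, hj0min⟩ := S.exists_min_image (fun j => |⟪x, xv j⟫|) hSne
    set μ := |⟪x, xv j0⟫| - lam with hμ
    have hμpos : 0 < μ := by
      have : ¬ |⟪x, xv j0⟫| ≤ lam := by
        have := hj0S; rw [hS, Finset.mem_filter] at this; exact this.2
      rw [hμ]; linarith [not_le.mp this]
    set t := min (μ/4) (1/2 : ℝ) with ht
    have ht0 : 0 < t := lt_min (by linarith) (by norm_num)
    have ht2 : t ≤ 1/2 := min_le_right _ _
    have htμ : 2*t ≤ μ/2 := by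
      have := min_le_left (μ/4) (1/2 : ℝ); linarith
    set y1 := (1-t) • x + t • u with hy1
    set y2 := (1-t) • x - t • u with hy2
    have hb1 : y1 ∈ Metric.closedBall (0 : EuclideanSpace ℝ (Fin n)) 1 := by
      rw [mem_closedBall_zero_iff]
      calc ‖y1‖ ≤ ‖(1-t) • x‖ + ‖t • u‖ := norm_add_le _ _
      _ = |1-t| * ‖x‖ + |t| * ‖u‖ := by rw [norm_smul, norm_smul]; simp [Real.norm_eq_abs]
      _ ≤ 1 := by
          rw [hx, hu1, abs_of_nonneg (by linarith : (0:ℝ) ≤ 1 - t), abs_of_pos ht0]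
          linarith
    have hb2 : y2 ∈ Metric.closedBall (0 : EuclideanSpace ℝ (Fin n)) 1 := by
      rw [mem_closedBall_zero_iff]
      calc ‖y2‖ ≤ ‖(1-t) • x‖ + ‖t • u‖ := norm_sub_le _ _
      _ = |1-t| * ‖x‖ + |t| * ‖u‖ := by rw [norm_smul, norm_smul]; simp [Real.norm_eq_abs]
      _ ≤ 1 := by
          rw [hx, hu1, abs_of_nonneg (by linarith : (0:ℝ) ≤ 1 - t), abs_of_pos ht0]
          linarith
    have hmeas : (fun j => satur lam ⟪y1, xv j⟫) = (fun j => satur lam ⟪y2, xv j⟫) := by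
      funext j
      have hinner1 : (⟪y1, xv j⟫ : ℝ) = (1-t) * ⟪x, xv j⟫ + t * ⟪u, xv j⟫ := by
        rw [hy1, inner_add_left, real_inner_smul_left, real_inner_smul_left]
      have hinner2 : (⟪y2, xv j⟫ : ℝ) = (1-t) * ⟪x, xv j⟫ - t * ⟪u, xv j⟫ := by
        rw [hy2, inner_sub_left, real_inner_smul_left, real_inner_smul_left]
      by_cases hj : |⟪x, xv j⟫| ≤ lam
      · rw [hinner1, hinner2, hu2 j (Finset.mem_filter.mpr ⟨Finset.mem_univ j, hj⟩), mul_zero, add_zero, sub_zero]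
      · have hjS : j ∈ S := by rw [hS, Finset.mem_filter]; exact ⟨Finset.mem_univ j, hj⟩
        have hmin : μ ≤ |⟪x, xv j⟫| - lam := by
          have := hj0min j hjS; rw [hμ]; linarith
        have hd : |⟪u, xv j⟫| ≤ 1 := by
          calc |⟪u, xv j⟫| ≤ ‖u‖ * ‖xv j‖ := abs_real_inner_le_norm _ _
          _ = 1 := by rw [hu1, hunit j, mul_one]
        have hc1 : |⟪x, xv j⟫| ≤ 1 := habs x hx.le j
        have hdneg : |-(⟪u, xv j⟫ : ℝ)| ≤ 1 := by rwa [abs_neg]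
        rcases lt_abs.mp (not_le.mp hj) with hpos | hneg
        · have hcμ : lam + μ ≤ ⟪x, xv j⟫ := by
            rw [abs_of_pos (by linarith)] at hmin; linarith
          have key : ∀ e : ℝ, |e| ≤ 1 → lam ≤ (1-t)*⟪x, xv j⟫ + t*e := by
            intro e he
            have h1 : 0 ≤ t * (2 - ⟪x, xv j⟫ + e) :=
              mul_nonneg ht0.le
                (by have := (abs_le.mp he).1; have := (abs_le.mp hc1).2; linarith)
            nlinarith
          rw [hinner1, satur_of_le hlam0.le (key _ hd), hinner2,
            show (1-t) * (⟪x, xv j⟫ : ℝ) - t * ⟪u, xv j⟫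
              = (1-t) * ⟪x, xv j⟫ + t * (-⟪u, xv j⟫) from by ring,
            satur_of_le hlam0.le (key _ hdneg)]
        · have hcμ : ⟪x, xv j⟫ ≤ -(lam + μ) := by
            rw [abs_of_neg (by linarith)] at hmin; linarith
          have key : ∀ e : ℝ, |e| ≤ 1 → (1-t)*⟪x, xv j⟫ + t*e ≤ -lam := by
            intro e he
            have h1 : 0 ≤ t * (2 + ⟪x, xv j⟫ - e) :=
              mul_nonneg ht0.le
                (by have := (abs_le.mp he).2; have := (abs_le.mp hc1).1; linarith)
            nlinarith
          rw [hinner1, satur_of_le_neg hlam0.le (key _ hd), hinner2,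
            show (1-t) * (⟪x, xv j⟫ : ℝ) - t * ⟪u, xv j⟫
              = (1-t) * ⟪x, xv j⟫ + t * (-⟪u, xv j⟫) from by ring,
            satur_of_le_neg hlam0.le (key _ hdneg)]
    have heq12 : y1 = y2 := hinj hb1 hb2 hmeas
    have hdiff : (2*t) • u = 0 := by
      have : y1 - y2 = (2*t) • u := by rw [hy1, hy2]; module
      rw [heq12, sub_self] at this; exact this.symm
    rcases smul_eq_zero.mp hdiff with h | h
    · exact absurd h (by positivity)
    · rw [h, norm_zero] at hu1; norm_num at hu1
  · -- packing → injectivity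
    intro hpack x hxB y hyB heq
    have hx1 : ‖x‖ ≤ 1 := mem_closedBall_zero_iff.mp hxB
    have hy1 : ‖y‖ ≤ 1 := mem_closedBall_zero_iff.mp hyB
    have heq' : ∀ j, satur lam ⟪x, xv j⟫ = satur lam ⟪y, xv j⟫ := fun j => congrFun heq j
    obtain ⟨s0, hs0sub, hs0card⟩ :=
      Finset.exists_subset_card_eq (show n ≤ (Finset.univ : Finset (Fin m)).card by simpa)
    obtain ⟨w, hw⟩ : ∃ w : EuclideanSpace ℝ (Fin n), w = (2:ℝ)⁻¹ • (x + y) := ⟨_, rfl⟩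
    have hwxy : ∀ j, (⟪w, xv j⟫ : ℝ) = (⟪x, xv j⟫ + ⟪y, xv j⟫)/2 := by
      intro j
      rw [hw, real_inner_smul_left, inner_add_left]; ring
    have hkey : ∀ j, |⟪w, xv j⟫| ≤ lam → (⟪x, xv j⟫ : ℝ) = ⟪y, xv j⟫ := by
      intro j hj
      rcases satur_eq_cases hlam0 (heq' j) with h | ⟨h1, h2⟩ | ⟨h1, h2⟩
      · exact h
      · rw [hwxy j] at hj; have := (abs_le.mp hj).2; linarith
      · rw [hwxy j] at hj; have := (abs_le.mp hj).1; linarith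
    rcases eq_or_ne w 0 with hw0 | hw0
    · -- y = -x
      have hxy : x + y = 0 := by
        rcases smul_eq_zero.mp (hw ▸ hw0) with h | h
        · norm_num at h
        · exact h
      have hyx : y = -x := by linear_combination (norm := module) hxy
      have hzero : ∀ j, (⟪x, xv j⟫ : ℝ) = 0 := by
        intro j
        have h2 := heq' j
        rw [hyx, inner_neg_left] at h2
        rcases satur_eq_cases hlam0 h2 with h | ⟨h1, h2⟩ | ⟨h1, h2⟩
        · linarith
        · linarith
        · linarith
      have hx0 : x = 0 :=
        eq_zero_of_orth (by omega) xv s0 hs0card (hfs s0 hs0card) x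
          (fun j _ => hzero j)
      rw [hx0, hyx, hx0, neg_zero]
    · have hwn : ‖w‖ ≤ 1 := by
        rw [hw]
        calc ‖(2:ℝ)⁻¹ • (x+y)‖ = 2⁻¹ * ‖x+y‖ := by
              rw [norm_smul]; norm_num
        _ ≤ 2⁻¹ * (‖x‖+‖y‖) := by
              have := norm_add_le x y; linarith
        _ ≤ 1 := by linarith
      obtain ⟨w', hw'⟩ : ∃ w' : EuclideanSpace ℝ (Fin n), w' = ‖w‖⁻¹ • w := ⟨_, rfl⟩
      have hw'1 : ‖w'‖ = 1 := hw' ▸ norm_smul_inv_norm hw0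
      have hpack' := hpack w' hw'1
      rw [hseteq w' hw'1, count_aux hmn] at hpack'
      obtain ⟨s, hs_sub, hs_card⟩ := Finset.exists_subset_card_eq hpack'
      have horth : ∀ j ∈ s, (⟪x - y, xv j⟫ : ℝ) = 0 := by
        intro j hj
        have hj' : |⟪w', xv j⟫| ≤ lam := by
          have := hs_sub hj
          rw [Finset.mem_filter] at this
          exact this.2
        have hwj : |⟪w, xv j⟫| ≤ lam := by
          have hww : (⟪w, xv j⟫ : ℝ) = ‖w‖ * ⟪w', xv j⟫ := by
            conv_lhs => rw [show w = ‖w‖ • w' from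
              (by rw [hw']; exact (smul_inv_smul₀ (norm_ne_zero_iff.mpr hw0) w).symm)]
            rw [real_inner_smul_left]
          rw [hww, abs_mul, abs_of_nonneg (norm_nonneg w)]
          calc ‖w‖ * |⟪w', xv j⟫| ≤ 1 * lam :=
                mul_le_mul hwn hj' (abs_nonneg _) zero_le_one
          _ = lam := one_mul lam
        rw [inner_sub_left, hkey j hwj, sub_self]
      have := eq_zero_of_orth (by omega) xv s hs_card (hfs s hs_card) (x - y) horth
      exact sub_eq_zero.mp this
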